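/- Let S be a right denominator set in a ring R and let Q = RS⁻¹ be the right Ore localization of R at S. Then Q is flat as a left R-module (via the canonical map R → Q). -/
import Mathlib

def IsFlatModule (R : Type*) [Ring R] (M : Type*) [AddCommGroup M] [Module R M] : Prop :=
  ∀ (n k : ℕ) (B : Matrix (Fin n) (Fin k) R) (x : Fin k → M),
    (∀ i, ∑ j, B i j • x j = 0) →
    ∃ (l : ℕ) (a : Matrix (Fin k) (Fin l) R) (y : Fin l → M),
      (∀ j, x j = ∑ p, a j p • y p) ∧ ∀ i p, (∑ j, B i j * a j p) = 0

-- common denominator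
lemma common_den {R : Type*} [Ring R] (S : Submonoid R)
    (oreCond : ∀ (r : R) (s : S), ∃ (r' : R) (s' : S), r * (s' : R) = (s : R) * r')
    {Q : Type*} [Ring Q] (f : R →+* Q)
    (hunit : ∀ s : S, IsUnit (f s))
    (hfrac : ∀ q : Q, ∃ (r : R) (s : S), q * f s = f r) :
    ∀ (k : ℕ) (x : Fin k → Q), ∃ (d : R), IsUnit (f d) ∧
      ∃ r : Fin k → R, ∀ j, x j * f d = f (r j) := by
  intro k
  induction k with
  | zero => exact fun x => ⟨1, by simp, fun j => j.elim0, fun j => j.elim0⟩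
  | succ k ih =>
    intro x
    obtain ⟨d, hd, r, hr⟩ := ih (fun j => x j.castSucc)
    obtain ⟨r₀, s₀, h0⟩ := hfrac (x (Fin.last k))
    obtain ⟨r', s', he⟩ := oreCond d s₀
    refine ⟨d * (s' : R), by rw [map_mul]; exact hd.mul (hunit s'),
      Fin.snoc (fun j => r j * (s' : R)) (r₀ * r'), ?_⟩
    intro j
    refine Fin.lastCases ?_ ?_ j
    · rw [Fin.snoc_last, he, map_mul, ← mul_assoc, h0, ← map_mul]
    · intro i
      rw [Fin.snoc_castSucc, map_mul, ← mul_assoc, hr, ← map_mul]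

lemma common_ann {R : Type*} [Ring R] (S : Submonoid R)
    (oreCond : ∀ (r : R) (s : S), ∃ (r' : R) (s' : S), r * (s' : R) = (s : R) * r')
    {Q : Type*} [Ring Q] (f : R →+* Q)
    (hker : ∀ r : R, f r = 0 ↔ ∃ s : S, r * (s : R) = 0) :
    ∀ (n : ℕ) (c : Fin n → R), (∀ i, f (c i) = 0) → ∃ t : S, ∀ i, c i * (t : R) = 0 := by
  intro n
  induction n with
  | zero => exact fun c _ => ⟨1, fun i => i.elim0⟩
  | succ n ih =>
    intro c hc
    obtain ⟨t, ht⟩ := ih (fun i => c i.castSucc) (fun i => hc _)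
    obtain ⟨t₀, ht₀⟩ := (hker (c (Fin.last n))).mp (hc _)
    obtain ⟨r', s', he⟩ := oreCond (t₀ : R) t
    refine ⟨t₀ * s', ?_⟩
    intro i
    refine Fin.lastCases ?_ ?_ i
    · rw [Submonoid.coe_mul, ← mul_assoc, ht₀, zero_mul]
    · intro i
      rw [Submonoid.coe_mul, he, ← mul_assoc, ht, zero_mul]

/-- Let `S` be a right denominator set in `R` (a submonoid satisfying the right Ore
condition and right reversibility) and let `Q = RS⁻¹` be the right Ore localization,
characterized by: images of elements of `S` are units, every element of `Q` is of the
form `f r * (f s)⁻¹`, and the kernel of the canonical map `f : R → Q` is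
`{r | ∃ s ∈ S, r * s = 0}`.  Then `Q` is flat as a left `R`-module via `f`. -/
theorem oreLocalization_flat {R : Type*} [Ring R] (S : Submonoid R)
    (oreCond : ∀ (r : R) (s : S), ∃ (r' : R) (s' : S), r * (s' : R) = (s : R) * r')
    (reversible : ∀ (r : R) (s : S), (s : R) * r = 0 → ∃ s' : S, r * (s' : R) = 0)
    (Q : Type*) [Ring Q] (f : R →+* Q)
    (hunit : ∀ s : S, IsUnit (f s))
    (hfrac : ∀ q : Q, ∃ (r : R) (s : S), q * f s = f r)
    (hker : ∀ r : R, f r = 0 ↔ ∃ s : S, r * (s : R) = 0) :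
    letI : Module R Q := Module.compHom Q f
    IsFlatModule R Q := by
  letI : Module R Q := Module.compHom Q f
  show IsFlatModule R Q
  intro n k B x hBx
  obtain ⟨d, hd, r, hr⟩ := common_den S oreCond f hunit hfrac k x
  have hsmul : ∀ (a : R) (q : Q), a • q = f a * q := fun a q => rfl
  have hc : ∀ i, f (∑ j, B i j * r j) = 0 := by
    intro i
    have : (∑ j, B i j • x j) * f d = 0 := by rw [hBx i, zero_mul]
    rw [Finset.sum_mul] at this
    rw [map_sum]
    rw [← this]
    refine Finset.sum_congr rfl fun j _ => ?_
    rw [map_mul, ← hr j, hsmul, mul_assoc]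
  obtain ⟨t, ht⟩ := common_ann S oreCond f hker n (fun i => ∑ j, B i j * r j) hc
  refine ⟨1, fun j _ => r j * (t : R), fun _ => ↑(hunit t).unit⁻¹ * ↑hd.unit⁻¹, ?_, ?_⟩
  · intro j
    rw [Fin.sum_univ_one, hsmul, map_mul, mul_assoc, ← mul_assoc (f t),
      IsUnit.mul_val_inv, one_mul]
    have := hr j
    calc x j = x j * f d * ↑hd.unit⁻¹ := by
            rw [mul_assoc, IsUnit.mul_val_inv, mul_one]
      _ = f (r j) * ↑hd.unit⁻¹ := by rw [hr j]
  · intro i p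
    have : ∑ j, B i j * (r j * (t : R)) = (∑ j, B i j * r j) * (t : R) := by
      rw [Finset.sum_mul]; exact Finset.sum_congr rfl fun j _ => (mul_assoc _ _ _).symm
    rw [this, ht i]
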